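/- arXiv:math/0108059 — 4 statements merged into one kernel-verified Lean document; each statement's English description precedes it below -/
import Mathlib

section
/- Let H be a complex Hilbert space and let A, B be bounded linear operators on H. If for every x in H either ⟨Ax, x⟩ = 0 or ⟨Bx, x⟩ = 0, then A = 0 or B = 0. -/
open scoped InnerProductSpace

open Polynomial in
theorem stmt_0 {H : Type*} [NormedAddCommGroup H] [InnerProductSpace ℂ H]
    [CompleteSpace H] (A B : H →L[ℂ] H)
    (h : ∀ x : H, ⟪A x, x⟫_ℂ = 0 ∨ ⟪B x, x⟫_ℂ = 0) :
    A = 0 ∨ B = 0 := by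
  by_contra hc
  push_neg at hc
  obtain ⟨hA, hB⟩ := hc
  have hA' : ∃ a, ⟪A a, a⟫_ℂ ≠ 0 := by
    by_contra h'
    push_neg at h'
    apply hA
    have := (inner_map_self_eq_zero (A : H →ₗ[ℂ] H)).mp h'
    ext x
    exact congrFun (congrArg DFunLike.coe this) x
  have hB' : ∃ b, ⟪B b, b⟫_ℂ ≠ 0 := by
    by_contra h'
    push_neg at h'
    apply hB
    have := (inner_map_self_eq_zero (B : H →ₗ[ℂ] H)).mp h'
    ext x
    exact congrFun (congrArg DFunLike.coe this) x
  obtain ⟨a, ha⟩ := hA'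
  obtain ⟨b, hb⟩ := hB'
  set P : ℂ[X] := C ⟪A a, a⟫_ℂ + C (⟪A a, b⟫_ℂ + ⟪A b, a⟫_ℂ) * X + C ⟪A b, b⟫_ℂ * X ^ 2 with hP
  set Q : ℂ[X] := C ⟪B a, a⟫_ℂ + C (⟪B a, b⟫_ℂ + ⟪B b, a⟫_ℂ) * X + C ⟪B b, b⟫_ℂ * X ^ 2 with hQ
  have hexp : ∀ (T : H →L[ℂ] H) (t : ℝ), ⟪T (a + (t : ℂ) • b), a + (t : ℂ) • b⟫_ℂ
      = ⟪T a, a⟫_ℂ + (⟪T a, b⟫_ℂ + ⟪T b, a⟫_ℂ) * t + ⟪T b, b⟫_ℂ * t ^ 2 := by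
    intro T t
    rw [map_add, map_smul]
    simp only [inner_add_left, inner_add_right, inner_smul_left, inner_smul_right,
      Complex.conj_ofReal]
    ring
  have key : ∀ t : ℝ, (P * Q).IsRoot (t : ℂ) := by
    intro t
    have := h (a + (t : ℂ) • b)
    simp only [IsRoot, eval_mul, hP, hQ, eval_add, eval_mul, eval_C, eval_X, eval_pow]
    rcases this with h1 | h1
    · rw [hexp A t] at h1
      rw [h1]; ring
    · rw [hexp B t] at h1
      rw [h1]; ring
  have hPQ : P * Q = 0 := by
    apply Polynomial.eq_zero_of_infinite_isRoot
    apply Set.Infinite.mono (s := Set.range ((↑·) : ℝ → ℂ))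
    · rintro x ⟨t, rfl⟩; exact key t
    · exact Set.infinite_range_of_injective Complex.ofReal_injective
  rcases mul_eq_zero.mp hPQ with h0 | h0
  · have := congrArg (Polynomial.eval 0) h0
    simp [hP] at this
    exact ha this
  · have := congrArg (fun p : ℂ[X] => p.coeff 2) h0
    simp [hQ, coeff_add, coeff_C, coeff_C_mul, coeff_X, coeff_X_pow] at this
    exact hb this
end

section
/- In a separable Hilbert space, any family of pairwise orthogonal nonzero idempotent bounded operators (i.e., EF = FE = 0 for distinct members) is countable. -/
theorem stmt_10 {H : Type*} [NormedAddCommGroup H] [InnerProductSpace ℂ H]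
    [CompleteSpace H] [TopologicalSpace.SeparableSpace H]
    {ι : Type*} (E : ι → (H →L[ℂ] H))
    (hidem : ∀ i, E i * E i = E i) (hne : ∀ i, E i ≠ 0)
    (horth : ∀ i j, i ≠ j → E i * E j = 0 ∧ E j * E i = 0) :
    Countable ι := by
  have hx : ∀ i, ∃ x : H, E i x = x ∧ ‖x‖ = 1 := by
    intro i
    obtain ⟨y, hy⟩ : ∃ y, E i y ≠ 0 := by
      by_contra h
      push_neg at h
      exact hne i (ContinuousLinearMap.ext fun y => by simp [h y])
    have hny : ‖E i y‖ ≠ 0 := norm_ne_zero_iff.mpr hy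
    refine ⟨((‖E i y‖ : ℂ))⁻¹ • E i y, ?_, ?_⟩
    · rw [map_smul]
      congr 1
      have := congrArg (fun T => T y) (hidem i)
      simpa using this
    · rw [norm_smul]
      simp [hny]
  choose x hEx hx1 using hx
  have hnorm : ∀ i, 0 < ‖E i‖ := fun i => norm_pos_iff.mpr (hne i)
  have hsep : ∀ i j, i ≠ j → 1 / ‖E i‖ ≤ ‖x i - x j‖ := by
    intro i j hij
    have hEixj : E i (x j) = 0 := by
      have h0 : E i (E j (x j)) = 0 := by
        have := congrArg (fun T => T (x j)) (horth i j hij).1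
        simpa using this
      rwa [hEx j] at h0
    have hEi : E i (x i - x j) = x i := by rw [map_sub, hEx i, hEixj, sub_zero]
    have hle : ‖x i‖ ≤ ‖E i‖ * ‖x i - x j‖ := by
      calc ‖x i‖ = ‖E i (x i - x j)‖ := by rw [hEi]
        _ ≤ ‖E i‖ * ‖x i - x j‖ := (E i).le_opNorm _
    rw [hx1 i] at hle
    rw [div_le_iff₀ (hnorm i)]
    linarith
  apply Pairwise.countable_of_isOpen_disjoint
    (s := fun i => Metric.ball (x i) (1 / (2 * ‖E i‖)))
  · intro i j hij
    simp only [Function.onFun]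
    apply Metric.ball_disjoint_ball
    have h1 := hsep i j hij
    have h2 := hsep j i hij.symm
    rw [norm_sub_rev] at h2
    rw [dist_eq_norm]
    have hi := hnorm i
    have hj := hnorm j
    rw [div_le_iff₀ hi] at h1
    rw [div_le_iff₀ hj] at h2
    rw [div_add_div _ _ (by positivity) (by positivity), div_le_iff₀ (by positivity)]
    nlinarith
  · intro i
    exact Metric.isOpen_ball
  · intro i
    have := hnorm i
    exact Metric.nonempty_ball.mpr (by positivity)
end

section
/- Let φ : B(H)_h → B(H)_h be a Jordan automorphism of the Jordan ring of self-adjoint bounded operators (an additive bijection with φ(AB + BA) = φ(A)φ(B) + φ(B)φ(A)). Then φ(λI) = λI for every real λ, and φ is real-linear. -/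
set_option maxHeartbeats 1000000
set_option synthInstance.maxHeartbeats 400000
set_option linter.unusedSectionVars false

section Aux
variable {H : Type*} [NormedAddCommGroup H] [InnerProductSpace ℂ H] [CompleteSpace H]

private lemma aux_smul_sa (r : ℝ) {A : H →L[ℂ] H} (hA : IsSelfAdjoint A) :
    IsSelfAdjoint (r • A) := by
  rw [IsSelfAdjoint, ← algebraMap_smul ℂ r A, star_smul, hA.star_eq]
  congr 1
  simp [Complex.ext_iff]

private lemma aux_scalar_nonneg {c : ℝ} (hc : 0 ≤ c) : 0 ≤ c • (1 : H →L[ℂ] H) := by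
  have h1 : (Real.sqrt c • (1 : H →L[ℂ] H)) * (Real.sqrt c • 1) = c • 1 := by
    rw [smul_mul_smul_comm, Real.mul_self_sqrt hc, mul_one]
  have h2 := star_mul_self_nonneg (Real.sqrt c • (1 : H →L[ℂ] H))
  rwa [star_smul, star_trivial, star_one, h1] at h2

private lemma aux_double {x y : H →L[ℂ] H} (h : x + x = y + y) : x = y := by
  have h2 : (2:ℝ) • x = (2:ℝ) • y := by rw [two_smul, two_smul]; exact h
  exact smul_right_injective _ (two_ne_zero) h2

end Aux

theorem stmt_16 {H : Type*} [NormedAddCommGroup H] [InnerProductSpace ℂ H]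
    [CompleteSpace H] (φ : (H →L[ℂ] H) → (H →L[ℂ] H))
    (hmaps : ∀ A, IsSelfAdjoint A → IsSelfAdjoint (φ A))
    (hbij : Set.BijOn φ {A : H →L[ℂ] H | IsSelfAdjoint A} {A : H →L[ℂ] H | IsSelfAdjoint A})
    (hadd : ∀ A B : H →L[ℂ] H, IsSelfAdjoint A → IsSelfAdjoint B → φ (A + B) = φ A + φ B)
    (hjordan : ∀ A B : H →L[ℂ] H, IsSelfAdjoint A → IsSelfAdjoint B →
      φ (A * B + B * A) = φ A * φ B + φ B * φ A) :
    (∀ lam : ℝ, φ (lam • (1 : H →L[ℂ] H)) = lam • (1 : H →L[ℂ] H)) ∧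
    (∀ (lam : ℝ) (A : H →L[ℂ] H), IsSelfAdjoint A → φ (lam • A) = lam • φ A) := by
  have hsa1 : IsSelfAdjoint (1 : H →L[ℂ] H) := IsSelfAdjoint.one _
  have hsa0 : IsSelfAdjoint (0 : H →L[ℂ] H) := IsSelfAdjoint.zero _
  -- φ 0 = 0
  have h0 : φ 0 = 0 := by
    have := hadd 0 0 hsa0 hsa0
    simp only [add_zero] at this
    exact (left_eq_add.mp this)
  -- φ 1 = 1
  have hone : φ 1 = 1 := by
    have key : ∀ B : H →L[ℂ] H, IsSelfAdjoint B → φ 1 * B + B * φ 1 = B + B := by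
      intro B hB
      obtain ⟨A, hA, rfl⟩ := hbij.surjOn hB
      have h1 : φ (1 * A + A * 1) = φ 1 * φ A + φ A * φ 1 := hjordan 1 A hsa1 hA
      rw [one_mul, mul_one, hadd A A hA hA] at h1
      exact h1.symm
    have h1 := key 1 hsa1
    rw [mul_one, one_mul] at h1
    exact aux_double h1
  -- φ of squares
  have hsamul : ∀ A : H →L[ℂ] H, IsSelfAdjoint A → IsSelfAdjoint (A * A) := by
    intro A hA
    rw [IsSelfAdjoint, star_mul, hA.star_eq]
  have hsq : ∀ A : H →L[ℂ] H, IsSelfAdjoint A → φ (A * A) = φ A * φ A := by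
    intro A hA
    have h1 := hjordan A A hA hA
    rw [hadd _ _ (hsamul A hA) (hsamul A hA)] at h1
    exact aux_double h1
  -- φ preserves nonnegativity
  have hpos : ∀ A : H →L[ℂ] H, 0 ≤ A → 0 ≤ φ A := by
    intro A h
    have hB : (0:H →L[ℂ] H) ≤ CFC.sqrt A := CFC.sqrt_nonneg A
    have hBsa : IsSelfAdjoint (CFC.sqrt A) := IsSelfAdjoint.of_nonneg hB
    have hAe : CFC.sqrt A * CFC.sqrt A = A := by
      have := CFC.sq_sqrt A h
      rwa [sq] at this
    have h2 := star_mul_self_nonneg (φ (CFC.sqrt A))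
    rwa [(hmaps _ hBsa).star_eq, ← hsq _ hBsa, hAe] at h2
  -- monotone
  have hmono : ∀ A B : H →L[ℂ] H, IsSelfAdjoint A → IsSelfAdjoint B → A ≤ B → φ A ≤ φ B := by
    intro A B hA hB hAB
    have hd : IsSelfAdjoint (B - A) := hB.sub hA
    have h1 : φ B = φ A + φ (B - A) := by
      rw [← hadd A (B - A) hA hd, add_sub_cancel]
    rw [h1]
    exact le_add_of_nonneg_right (hpos _ (sub_nonneg.mpr hAB))
  -- negation
  have hneg : ∀ A : H →L[ℂ] H, IsSelfAdjoint A → φ (-A) = -φ A := by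
    intro A hA
    have h1 := hadd A (-A) hA hA.neg
    rw [add_neg_cancel, h0] at h1
    exact eq_neg_of_add_eq_zero_right h1.symm
  -- natural number homogeneity
  have hnat : ∀ (n : ℕ) (A : H →L[ℂ] H), IsSelfAdjoint A → φ ((n:ℝ) • A) = (n:ℝ) • φ A := by
    intro n
    induction n with
    | zero => intro A hA; simp [h0]
    | succ n ih =>
      intro A hA
      have e : ((n+1 : ℕ):ℝ) • A = (n:ℝ) • A + A := by
        push_cast; rw [add_smul, one_smul]
      rw [e, hadd _ _ (aux_smul_sa _ hA) hA, ih A hA]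
      push_cast
      rw [add_smul, one_smul]
  -- integer homogeneity
  have hint : ∀ (n : ℤ) (A : H →L[ℂ] H), IsSelfAdjoint A → φ ((n:ℝ) • A) = (n:ℝ) • φ A := by
    intro n A hA
    obtain ⟨m, rfl | rfl⟩ := Int.eq_nat_or_neg n
    · exact_mod_cast hnat m A hA
    · push_cast
      rw [neg_smul, neg_smul, hneg _ (aux_smul_sa _ hA), hnat m A hA]
  -- rational fixed points
  have hrat : ∀ q : ℚ, φ ((q:ℝ) • (1 : H →L[ℂ] H)) = (q:ℝ) • 1 := by
    intro q
    have hsaq : IsSelfAdjoint ((q:ℝ) • (1 : H →L[ℂ] H)) := aux_smul_sa _ hsa1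
    have hden : ((q.den:ℝ)) ≠ 0 := by exact_mod_cast q.den_nz
    have e1 : ((q.den:ℝ)) • ((q:ℝ) • (1 : H →L[ℂ] H)) = ((q.num:ℝ)) • 1 := by
      rw [smul_smul]
      congr 1
      rw [mul_comm]
      exact_mod_cast (Rat.mul_den_eq_num q)
    have h1 := hnat q.den _ hsaq
    rw [e1, hint q.num 1 hsa1, hone] at h1
    have h2 : ((q.den:ℝ)) • φ ((q:ℝ) • (1 : H →L[ℂ] H)) = ((q.den:ℝ)) • ((q:ℝ) • (1 : H →L[ℂ] H)) := by
      rw [← h1, e1]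
    exact smul_right_injective _ hden h2
  -- scalar order
  have hscal_le : ∀ a b : ℝ, a ≤ b → (a • (1 : H →L[ℂ] H)) ≤ b • 1 := by
    intro a b hab
    rw [← sub_nonneg, ← sub_smul]
    exact aux_scalar_nonneg (by linarith)
  -- part (i)
  have part1 : ∀ lam : ℝ, φ (lam • (1 : H →L[ℂ] H)) = lam • (1 : H →L[ℂ] H) := by
    intro lam
    set X := φ (lam • (1 : H →L[ℂ] H)) with hX
    have hsaL : IsSelfAdjoint (lam • (1 : H →L[ℂ] H)) := aux_smul_sa _ hsa1
    have hub : ∀ ε : ℝ, 0 < ε → X ≤ (lam + ε) • 1 := by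
      intro ε hε
      obtain ⟨q, hq1, hq2⟩ := exists_rat_btwn (show lam < lam + ε by linarith)
      calc X ≤ φ ((q:ℝ) • 1) := hmono _ _ hsaL (aux_smul_sa _ hsa1) (hscal_le _ _ hq1.le)
        _ = (q:ℝ) • 1 := hrat q
        _ ≤ (lam + ε) • 1 := hscal_le _ _ hq2.le
    have hlb : ∀ ε : ℝ, 0 < ε → (lam - ε) • 1 ≤ X := by
      intro ε hε
      obtain ⟨q, hq1, hq2⟩ := exists_rat_btwn (show lam - ε < lam by linarith)
      calc (lam - ε) • (1:H →L[ℂ] H) ≤ (q:ℝ) • 1 := hscal_le _ _ hq1.le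
        _ = φ ((q:ℝ) • 1) := (hrat q).symm
        _ ≤ X := hmono _ _ (aux_smul_sa _ hsa1) hsaL (hscal_le _ _ hq2.le)
    have hc : Continuous fun ε : ℝ => (lam + ε) • (1 : H →L[ℂ] H) :=
      (continuous_const.add continuous_id).smul continuous_const
    have hc' : Continuous fun ε : ℝ => (lam - ε) • (1 : H →L[ℂ] H) :=
      (continuous_const.sub continuous_id).smul continuous_const
    have ht : Filter.Tendsto (fun ε : ℝ => (lam + ε) • (1 : H →L[ℂ] H)) (nhdsWithin 0 (Set.Ioi 0))
        (nhds (lam • 1)) := by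
      have := hc.tendsto 0
      simp only [add_zero] at this
      exact this.mono_left nhdsWithin_le_nhds
    have ht' : Filter.Tendsto (fun ε : ℝ => (lam - ε) • (1 : H →L[ℂ] H)) (nhdsWithin 0 (Set.Ioi 0))
        (nhds (lam • 1)) := by
      have := hc'.tendsto 0
      simp only [sub_zero] at this
      exact this.mono_left nhdsWithin_le_nhds
    have h1 : X ≤ lam • 1 :=
      ge_of_tendsto ht (Filter.eventually_mem_set.mpr self_mem_nhdsWithin |>.mono
        fun ε hε => hub ε hε)
    have h2 : lam • (1:H →L[ℂ] H) ≤ X :=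
      le_of_tendsto ht' (Filter.eventually_mem_set.mpr self_mem_nhdsWithin |>.mono
        fun ε hε => hlb ε hε)
    exact le_antisymm h1 h2
  refine ⟨part1, ?_⟩
  -- part (ii)
  intro lam A hA
  have hsaL : IsSelfAdjoint (lam • (1 : H →L[ℂ] H)) := aux_smul_sa _ hsa1
  have hj := hjordan A (lam • 1) hA hsaL
  have e1 : A * (lam • 1) + (lam • 1) * A = lam • A + lam • A := by
    rw [mul_smul_comm, smul_mul_assoc, mul_one, one_mul]
  have e2 : φ A * (lam • 1) + (lam • 1) * φ A = lam • φ A + lam • φ A := by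
    rw [mul_smul_comm, smul_mul_assoc, mul_one, one_mul]
  rw [e1, part1 lam, hadd _ _ (aux_smul_sa _ hA) (aux_smul_sa _ hA), e2] at hj
  exact aux_double hj
end

section
/- Let φ : B(H)_h → B(H)_h be a map such that φ(P) = P for every orthogonal projection P, and for every A ∈ B(H)_h and unit vector x ∈ H there exists a unitary or antiunitary operator U (depending on A and x) with φ(A) = UAU* and φ(x⊗x) = U(x⊗x)U*. Then φ(A) = A for all A ∈ B(H)_h. -/
open scoped InnerProductSpace
open ComplexConjugate

/-- The rank-one operator `u ⊗ v : z ↦ ⟨z, v⟩ u`. -/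
noncomputable def rankOne' {H : Type*} [NormedAddCommGroup H] [InnerProductSpace ℂ H]
    (u v : H) : H →L[ℂ] H :=
  (innerSL ℂ v).smulRight u

lemma antiunitary_inner {H : Type*} [NormedAddCommGroup H] [InnerProductSpace ℂ H]
    (V : H ≃ₛₗᵢ[starRingEnd ℂ] H) (a b : H) :
    ⟪V a, V b⟫_ℂ = conj ⟪a, b⟫_ℂ := by
  have h3 : V a - Complex.I • V b = V (a + Complex.I • b) := by
    rw [map_add, V.map_smulₛₗ]; simp [sub_eq_add_neg]
  have h4 : V a + Complex.I • V b = V (a - Complex.I • b) := by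
    rw [map_sub, V.map_smulₛₗ]; simp [sub_eq_add_neg]
  have n1 : ‖V a + V b‖ = ‖a + b‖ := by rw [← V.map_add, V.norm_map]
  have n2 : ‖V a - V b‖ = ‖a - b‖ := by rw [← V.map_sub, V.norm_map]
  have n3 : ‖V a - Complex.I • V b‖ = ‖a + Complex.I • b‖ := by rw [h3, V.norm_map]
  have n4 : ‖V a + Complex.I • V b‖ = ‖a - Complex.I • b‖ := by rw [h4, V.norm_map]
  rw [inner_eq_sum_norm_sq_div_four, inner_eq_sum_norm_sq_div_four]
  simp only [RCLike.I_to_complex]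
  rw [n1, n2, n3, n4, map_div₀]
  simp only [map_add, map_sub, map_mul, map_pow, Complex.conj_ofReal, RCLike.conj_ofReal,
    Complex.conj_I, map_ofNat]
  ring

lemma antiunitary_inner_flip {H : Type*} [NormedAddCommGroup H] [InnerProductSpace ℂ H]
    (V : H ≃ₛₗᵢ[starRingEnd ℂ] H) (a b : H) :
    ⟪V a, b⟫_ℂ = conj ⟪a, V.symm b⟫_ℂ := by
  have := antiunitary_inner V a (V.symm b)
  rwa [V.apply_symm_apply] at this

lemma rankOne'_apply {H : Type*} [NormedAddCommGroup H] [InnerProductSpace ℂ H]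
    (u v z : H) : rankOne' u v z = ⟪v, z⟫_ℂ • u := rfl

theorem stmt_18 {H : Type*} [NormedAddCommGroup H] [InnerProductSpace ℂ H]
    [CompleteSpace H] (φ : (H →L[ℂ] H) → (H →L[ℂ] H))
    (hproj : ∀ P : H →L[ℂ] H, IsSelfAdjoint P → P * P = P → φ P = P)
    (hloc : ∀ A : H →L[ℂ] H, IsSelfAdjoint A → ∀ x : H, ‖x‖ = 1 →
      (∃ U : H ≃ₗᵢ[ℂ] H,
        (∀ z : H, φ A z = U (A (U.symm z))) ∧
        (∀ z : H, φ (rankOne' x x) z = U (rankOne' x x (U.symm z)))) ∨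
      (∃ V : H ≃ₛₗᵢ[starRingEnd ℂ] H,
        (∀ z : H, φ A z = V (A (V.symm z))) ∧
        (∀ z : H, φ (rankOne' x x) z = V (rankOne' x x (V.symm z))))) :
    ∀ A : H →L[ℂ] H, IsSelfAdjoint A → φ A = A := by
  intro A hA
  -- key: equality of quadratic forms on unit vectors
  have key : ∀ x : H, ‖x‖ = 1 → ⟪(φ A) x, x⟫_ℂ = ⟪A x, x⟫_ℂ := by
    intro x hx
    have hxx : ⟪x, x⟫_ℂ = 1 := by
      rw [inner_self_eq_norm_sq_to_K, hx]; norm_num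
    -- the rank-one projection is fixed by φ
    have hPsa : IsSelfAdjoint (rankOne' x x) := by
      rw [ContinuousLinearMap.isSelfAdjoint_iff_isSymmetric]
      intro a b
      simp only [ContinuousLinearMap.coe_coe, rankOne'_apply, inner_smul_left,
        inner_smul_right, inner_conj_symm]
      ring
    have hPP : rankOne' x x * rankOne' x x = rankOne' x x := by
      ext z
      simp only [ContinuousLinearMap.mul_apply, rankOne'_apply, inner_smul_right, hxx]
      rw [mul_one]
    have hfix : φ (rankOne' x x) = rankOne' x x := hproj _ hPsa hPP
    have hfixx : rankOne' x x x = x := by rw [rankOne'_apply, hxx, one_smul]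
    rcases hloc A hA x hx with ⟨U, hAU, hPU⟩ | ⟨V, hAV, hPV⟩
    · -- unitary case
      set c : ℂ := ⟪x, U.symm x⟫_ℂ with hc
      have hx' : x = c • U x := by
        calc x = rankOne' x x x := hfixx.symm
        _ = (φ (rankOne' x x)) x := by rw [hfix]
        _ = U (rankOne' x x (U.symm x)) := hPU x
        _ = c • U x := by rw [rankOne'_apply, map_smul]
      have hUsymm : U.symm x = c • x := by
        calc U.symm x = U.symm (c • U x) := by rw [← hx']
        _ = c • x := by rw [map_smul, U.symm_apply_apply]
      have hcnorm : ‖c‖ = 1 := by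
        have h1 : ‖U.symm x‖ = 1 := by rw [U.symm.norm_map, hx]
        rwa [hUsymm, norm_smul, hx, mul_one] at h1
      have hcc : conj c * c = 1 := by
        rw [RCLike.conj_mul]
        norm_cast
        rw [hcnorm]; norm_num
      rw [hAU x, U.inner_map_eq_flip, hUsymm, map_smul, inner_smul_left, inner_smul_right,
        ← mul_assoc, hcc, one_mul]
    · -- antiunitary case
      set c : ℂ := ⟪x, V.symm x⟫_ℂ with hc
      have hx' : x = conj c • V x := by
        calc x = rankOne' x x x := hfixx.symm
        _ = (φ (rankOne' x x)) x := by rw [hfix]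
        _ = V (rankOne' x x (V.symm x)) := hPV x
        _ = conj c • V x := by rw [rankOne'_apply, V.map_smulₛₗ]
      have hVsymm : V.symm x = c • x := by
        calc V.symm x = V.symm (conj c • V x) := by rw [← hx']
        _ = conj (conj c) • V.symm (V x) := V.symm.map_smulₛₗ _ _
        _ = c • x := by rw [V.symm_apply_apply, Complex.conj_conj]
      have hcnorm : ‖c‖ = 1 := by
        have h1 : ‖V.symm x‖ = 1 := by rw [V.symm.norm_map, hx]
        rwa [hVsymm, norm_smul, hx, mul_one] at h1
      have hcc : conj c * c = 1 := by
        rw [RCLike.conj_mul]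
        norm_cast
        rw [hcnorm]; norm_num
      rw [hAV x, antiunitary_inner_flip, hVsymm, map_smul, inner_smul_left, inner_smul_right,
        ← mul_assoc, hcc, one_mul, inner_conj_symm]
      exact (ContinuousLinearMap.isSelfAdjoint_iff_isSymmetric.mp hA x x).symm
  -- extend to all vectors and conclude
  have all : ∀ x : H, ⟪(φ A) x, x⟫_ℂ = ⟪A x, x⟫_ℂ := by
    intro x
    rcases eq_or_ne x 0 with rfl | hx0
    · simp
    · have hn : ‖x‖ ≠ 0 := norm_ne_zero_iff.mpr hx0
      have hcn : ((‖x‖ : ℂ)) ≠ 0 := by exact_mod_cast hn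
      set r : ℝ := ‖x‖ with hr
      set w : H := ((r : ℂ))⁻¹ • x with hw
      have hy1 : ‖w‖ = 1 := by
        rw [hw, norm_smul, norm_inv, Complex.norm_real, Real.norm_eq_abs,
          abs_of_nonneg (norm_nonneg x), ← hr, inv_mul_cancel₀ hn]
      have hk := key _ hy1
      have hxw : x = (r : ℂ) • w := (smul_inv_smul₀ hcn x).symm
      clear_value w
      rw [hxw]
      simp only [map_smul, inner_smul_left, inner_smul_right]
      rw [hk]
  have hlin : ((φ A : H →L[ℂ] H) : H →ₗ[ℂ] H) = (A : H →ₗ[ℂ] H) :=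
    (ext_inner_map _ _).mp all
  exact ContinuousLinearMap.coe_injective hlin
end
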